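/- Let p ≥ 2, let I be a partition of {1,…,p}, and let J be a partition of the set I (viewing I as a finite set of blocks). Assume that for every i ∈ {1,…,p}, if {i} is a block of I then {{i}} is not a block of J. Then the number of blocks of J satisfies |J| ≤ p/2. Moreover, |J| = p/2 holds if and only if (I, J) is a double partition into pairs of {1,…,p}. -/
import Mathlib


/-- `𝓘` is a partition of the finite set `B`. -/
def IsPartitionOf {α : Type*} (B : Finset α) (𝓘 : Finset (Finset α)) : Prop :=
  (∀ I ∈ 𝓘, I.Nonempty) ∧ (∀ I ∈ 𝓘, I ⊆ B) ∧ ∀ a ∈ B, ∃! I, I ∈ 𝓘 ∧ a ∈ I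

/-- `𝓘` is a partition of the finite set `B` into pairs. -/
def IsPairPartitionOf {α : Type*} (B : Finset α) (𝓘 : Finset (Finset α)) : Prop :=
  IsPartitionOf B 𝓘 ∧ ∀ I ∈ 𝓘, I.card = 2

/-- `(𝓘, 𝓙)` is a double partition into pairs of `A` with distinguished subset `S`:
`𝓘` is a partition of `A`, `𝓙` a partition of (the set of blocks of) `𝓘`, the blocks of
`𝓘` contained in `S` are exactly the singletons `{s}`, `s ∈ S`, the remaining blocks of
`𝓘` form a partition of `A \ S` into pairs, the blocks of `𝓙` contained in
`𝓘_S = {{s} : s ∈ S}` form a partition of `𝓘_S` into pairs, and the remaining blocks of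
`𝓙` are exactly the singletons `{I}` for `I ∈ 𝓘 \ 𝓘_S`. -/
def IsDPPWith {α : Type*} [DecidableEq α] (A : Finset α) (𝓘 : Finset (Finset α))
    (𝓙 : Finset (Finset (Finset α))) (S : Finset α) : Prop :=
  IsPartitionOf A 𝓘 ∧ IsPartitionOf 𝓘 𝓙 ∧ S ⊆ A ∧
  𝓘.filter (fun I => I ⊆ S) = S.image (fun s => ({s} : Finset α)) ∧
  IsPairPartitionOf (A \ S) (𝓘 \ S.image (fun s => ({s} : Finset α))) ∧
  IsPairPartitionOf (S.image (fun s => ({s} : Finset α)))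
    (𝓙.filter (fun J => J ⊆ S.image (fun s => ({s} : Finset α)))) ∧
  𝓙 \ 𝓙.filter (fun J => J ⊆ S.image (fun s => ({s} : Finset α))) =
    (𝓘 \ S.image (fun s => ({s} : Finset α))).image
      (fun I => ({I} : Finset (Finset α)))

/-- `(𝓘, 𝓙)` is a double partition into pairs of `A`. -/
def IsDPP {α : Type*} [DecidableEq α] (A : Finset α) (𝓘 : Finset (Finset α))
    (𝓙 : Finset (Finset (Finset α))) : Prop :=
  ∃ S, IsDPPWith A 𝓘 𝓙 S

lemma IsPartitionOf.eq_of_mem {α : Type*} {B : Finset α} {𝓘 : Finset (Finset α)}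
    (h : IsPartitionOf B 𝓘) {I I' : Finset α} (hI : I ∈ 𝓘) (hI' : I' ∈ 𝓘)
    {a : α} (ha : a ∈ I) (ha' : a ∈ I') : I = I' := by
  obtain ⟨J, hJ, hu⟩ := h.2.2 a (h.2.1 I hI ha)
  exact (hu I ⟨hI, ha⟩).trans (hu I' ⟨hI', ha'⟩).symm

lemma IsPartitionOf.sum_eq {α : Type*} [DecidableEq α] {B : Finset α} {𝓘 : Finset (Finset α)}
    (h : IsPartitionOf B 𝓘) (f : α → ℕ) : ∑ I ∈ 𝓘, ∑ a ∈ I, f a = ∑ a ∈ B, f a := by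
  rw [← Finset.sum_biUnion]
  · congr 1
    apply Finset.Subset.antisymm
    · intro a ha
      simp only [Finset.mem_biUnion, id] at ha
      obtain ⟨I, hI, haI⟩ := ha
      exact h.2.1 I hI haI
    · intro a ha
      obtain ⟨I, ⟨hI, haI⟩, _⟩ := h.2.2 a ha
      simp only [Finset.mem_biUnion, id]
      exact ⟨I, hI, haI⟩
  · intro I hI I' hI' hne
    simp only [Function.onFun, id]
    rw [Finset.disjoint_left]
    intro a haI haI'
    exact hne (h.eq_of_mem hI hI' haI haI')

lemma IsPartitionOf.sum_card {α : Type*} [DecidableEq α] {B : Finset α} {𝓘 : Finset (Finset α)}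
    (h : IsPartitionOf B 𝓘) : ∑ I ∈ 𝓘, I.card = B.card := by
  simpa using h.sum_eq (fun _ => 1)

/-- Let `p ≥ 2`, `𝓘` a partition of `{1,…,p}` and `𝓙` a partition of `𝓘` such that no
singleton block `{i}` of `𝓘` gives a singleton block `{{i}}` of `𝓙`. Then `|𝓙| ≤ p/2`,
with equality if and only if `(𝓘, 𝓙)` is a double partition into pairs of `{1,…,p}`. -/
theorem stmt_6 (p : ℕ) (hp : 2 ≤ p)
    (𝓘 : Finset (Finset (Fin p))) (𝓙 : Finset (Finset (Finset (Fin p))))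
    (h𝓘 : IsPartitionOf Finset.univ 𝓘) (h𝓙 : IsPartitionOf 𝓘 𝓙)
    (hsing : ∀ i : Fin p, ({i} : Finset (Fin p)) ∈ 𝓘 →
      ({({i} : Finset (Fin p))} : Finset (Finset (Fin p))) ∉ 𝓙) :
    2 * 𝓙.card ≤ p ∧ (2 * 𝓙.card = p ↔ IsDPP Finset.univ 𝓘 𝓙) := by
  have hsum : ∑ J ∈ 𝓙, ∑ I ∈ J, I.card = p := by
    rw [h𝓙.sum_eq (fun I => I.card), h𝓘.sum_card]
    simp
  have h1 : ∀ J ∈ 𝓙, ∀ I ∈ J, 1 ≤ I.card := fun J hJ I hI =>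
    Finset.card_pos.2 (h𝓘.1 I (h𝓙.2.1 J hJ hI))
  have hge : ∀ J ∈ 𝓙, 2 ≤ ∑ I ∈ J, I.card := by
    intro J hJ
    obtain ⟨I, hIJ⟩ := h𝓙.1 J hJ
    have hI𝓘 : I ∈ 𝓘 := h𝓙.2.1 J hJ hIJ
    rcases Nat.lt_or_ge J.card 2 with h2 | h2
    · have hJcard : J.card = 1 := le_antisymm (by omega) (Finset.card_pos.2 ⟨I, hIJ⟩)
      obtain ⟨I₀, hI₀⟩ := Finset.card_eq_one.1 hJcard
      subst hI₀
      simp only [Finset.mem_singleton] at hIJ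
      subst hIJ
      rw [Finset.sum_singleton]
      by_contra h
      have hc : I.card = 1 := by have := h1 {I} hJ I (Finset.mem_singleton_self I); omega
      obtain ⟨i, hi⟩ := Finset.card_eq_one.1 hc
      subst hi
      exact hsing i hI𝓘 hJ
    · calc 2 ≤ J.card := h2
        _ = ∑ _I ∈ J, 1 := by simp
        _ ≤ ∑ I ∈ J, I.card := Finset.sum_le_sum (h1 J hJ)
  have hineq : 2 * 𝓙.card ≤ p := by
    calc 2 * 𝓙.card = ∑ _J ∈ 𝓙, 2 := by simp [mul_comm]
      _ ≤ ∑ J ∈ 𝓙, ∑ I ∈ J, I.card := Finset.sum_le_sum hge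
      _ = p := hsum
  refine ⟨hineq, ?_, ?_⟩
  · -- equality → DPP
    intro heq
    have hw : ∀ J ∈ 𝓙, ∑ I ∈ J, I.card = 2 := by
      have h2 : ∑ _J ∈ 𝓙, 2 = ∑ J ∈ 𝓙, ∑ I ∈ J, I.card := by
        rw [hsum]
        simp [mul_comm] at heq ⊢
        omega
      intro J hJ
      exact ((Finset.sum_eq_sum_iff_of_le hge).1 h2 J hJ).symm
    set S : Finset (Fin p) := Finset.univ.filter (fun s => ({s} : Finset (Fin p)) ∈ 𝓘) with hSdef
    have hS : ∀ s : Fin p, s ∈ S ↔ ({s} : Finset (Fin p)) ∈ 𝓘 := by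
      intro s; simp [hSdef]
    have hmem𝓘S : ∀ I : Finset (Fin p),
        I ∈ S.image (fun s => ({s} : Finset (Fin p))) ↔ ∃ s, ({s} : Finset (Fin p)) ∈ 𝓘 ∧ I = {s} := by
      intro I
      simp only [Finset.mem_image]
      constructor
      · rintro ⟨s, hs, rfl⟩; exact ⟨s, (hS s).1 hs, rfl⟩
      · rintro ⟨s, hs, rfl⟩; exact ⟨s, (hS s).2 hs, rfl⟩
    -- blocks of 𝓘 outside 𝓘S have card 2 and are singleton blocks of 𝓙
    have hbig : ∀ I ∈ 𝓘, I ∉ S.image (fun s => ({s} : Finset (Fin p))) →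
        I.card = 2 ∧ ({I} : Finset (Finset (Fin p))) ∈ 𝓙 := by
      intro I hI hIn
      have hc1 : 1 ≤ I.card := Finset.card_pos.2 (h𝓘.1 I hI)
      have hc : I.card ≠ 1 := by
        intro h
        obtain ⟨s, rfl⟩ := Finset.card_eq_one.1 h
        exact hIn ((hmem𝓘S _).2 ⟨s, hI, rfl⟩)
      obtain ⟨J, ⟨hJ, hIJ⟩, _⟩ := h𝓙.2.2 I hI
      have hsumJ : I.card + ∑ I' ∈ J.erase I, I'.card = 2 := by
        rw [Finset.add_sum_erase _ _ hIJ]; exact hw J hJ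
      have herase : J.erase I = ∅ := by
        by_contra h
        obtain ⟨I', hI'⟩ := Finset.nonempty_of_ne_empty h
        have hle : I'.card ≤ ∑ I'' ∈ J.erase I, I''.card :=
          Finset.single_le_sum (fun i _ => Nat.zero_le _) hI'
        have := h1 J hJ I' (Finset.mem_of_mem_erase hI')
        omega
      have hJeq : J = {I} := by
        rcases (Finset.erase_eq_empty_iff J I).1 herase with h | h
        · exact absurd hIJ (h ▸ Finset.notMem_empty I)
        · exact h
      refine ⟨by rw [hJeq] at hsumJ; simpa using hsumJ, hJeq ▸ hJ⟩
    -- 𝓙-blocks containing a singleton consist of singletons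
    have hsingJ : ∀ s : Fin p, ({s} : Finset (Fin p)) ∈ 𝓘 → ∀ J ∈ 𝓙,
        ({s} : Finset (Fin p)) ∈ J → J ⊆ S.image (fun t => ({t} : Finset (Fin p))) := by
      intro s hs J hJ hsJ I hIJ
      have hI𝓘 : I ∈ 𝓘 := h𝓙.2.1 J hJ hIJ
      have hIc : I.card = 1 := by
        by_contra h
        have h2 : 2 ≤ I.card := by have := h1 J hJ I hIJ; omega
        have hne : I ≠ ({s} : Finset (Fin p)) := by
          intro h'; rw [h'] at h2; simp at h2
        have hsub : ({I, ({s} : Finset (Fin p))} : Finset (Finset (Fin p))) ⊆ J := by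
          intro x hx
          rcases Finset.mem_insert.1 hx with rfl | hx
          · exact hIJ
          · exact (Finset.mem_singleton.1 hx) ▸ hsJ
        have hle : ∑ I' ∈ ({I, ({s} : Finset (Fin p))} : Finset (Finset (Fin p))), I'.card
            ≤ ∑ I' ∈ J, I'.card :=
          Finset.sum_le_sum_of_subset hsub
        rw [Finset.sum_insert (by simpa using hne), Finset.sum_singleton] at hle
        have := hw J hJ
        simp at hle
        omega
      obtain ⟨t, rfl⟩ := Finset.card_eq_one.1 hIc
      exact (hmem𝓘S _).2 ⟨t, hI𝓘, rfl⟩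
    -- blocks of 𝓙 inside 𝓘S are pairs
    have hcard1 : ∀ J ∈ 𝓙, J ⊆ S.image (fun s => ({s} : Finset (Fin p))) → J.card = 2 := by
      intro J hJ hJsub
      have : ∑ I ∈ J, I.card = ∑ _I ∈ J, 1 := by
        apply Finset.sum_congr rfl
        intro I hI
        obtain ⟨s, _, rfl⟩ := (hmem𝓘S I).1 (hJsub hI)
        simp
      have h2 := hw J hJ
      rw [this] at h2
      simpa using h2
    refine ⟨S, h𝓘, h𝓙, Finset.subset_univ S, ?_, ⟨⟨?_, ?_, ?_⟩, ?_⟩, ⟨⟨?_, ?_, ?_⟩, ?_⟩, ?_⟩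
    · -- filter eq
      ext I
      simp only [Finset.mem_filter, Finset.mem_image]
      constructor
      · rintro ⟨hI, hIS⟩
        obtain ⟨a, ha⟩ := h𝓘.1 I hI
        have haS : a ∈ S := hIS ha
        have h1a : ({a} : Finset (Fin p)) ∈ 𝓘 := (hS a).1 haS
        have : I = {a} := h𝓘.eq_of_mem hI h1a ha (Finset.mem_singleton_self a)
        exact ⟨a, haS, this.symm⟩
      · rintro ⟨s, hsS, rfl⟩
        exact ⟨(hS s).1 hsS, Finset.singleton_subset_iff.2 hsS⟩
    · -- 5 nonempty
      intro I hI
      exact h𝓘.1 I (Finset.mem_sdiff.1 hI).1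
    · -- 5 subset
      intro I hI a ha
      obtain ⟨hI𝓘, hIn⟩ := Finset.mem_sdiff.1 hI
      rw [Finset.mem_sdiff]
      refine ⟨Finset.mem_univ a, fun haS => ?_⟩
      have h1a : ({a} : Finset (Fin p)) ∈ 𝓘 := (hS a).1 haS
      have : I = {a} := h𝓘.eq_of_mem hI𝓘 h1a ha (Finset.mem_singleton_self a)
      exact hIn ((hmem𝓘S I).2 ⟨a, h1a, this⟩)
    · -- 5 cover
      intro a ha
      have haS : a ∉ S := (Finset.mem_sdiff.1 ha).2
      obtain ⟨I, ⟨hI, haI⟩, hu⟩ := h𝓘.2.2 a (Finset.mem_univ a)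
      have hIn : I ∉ S.image (fun s => ({s} : Finset (Fin p))) := by
        intro h
        obtain ⟨s, hs, rfl⟩ := (hmem𝓘S I).1 h
        rw [Finset.mem_singleton] at haI
        subst haI
        exact haS ((hS a).2 hs)
      refine ⟨I, ⟨Finset.mem_sdiff.2 ⟨hI, hIn⟩, haI⟩, ?_⟩
      rintro I' ⟨hI', haI'⟩
      exact hu I' ⟨(Finset.mem_sdiff.1 hI').1, haI'⟩
    · -- 5 pairs
      intro I hI
      obtain ⟨hI𝓘, hIn⟩ := Finset.mem_sdiff.1 hI
      exact (hbig I hI𝓘 hIn).1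
    · -- 6 nonempty
      intro J hJ
      exact h𝓙.1 J (Finset.mem_filter.1 hJ).1
    · -- 6 subset
      intro J hJ
      exact (Finset.mem_filter.1 hJ).2
    · -- 6 cover
      intro I hI
      obtain ⟨s, hs𝓘, rfl⟩ := (hmem𝓘S I).1 hI
      obtain ⟨J, ⟨hJ, hsJ⟩, hu⟩ := h𝓙.2.2 _ hs𝓘
      refine ⟨J, ⟨Finset.mem_filter.2 ⟨hJ, hsingJ s hs𝓘 J hJ hsJ⟩, hsJ⟩, ?_⟩
      rintro J' ⟨hJ', hsJ'⟩
      exact hu J' ⟨(Finset.mem_filter.1 hJ').1, hsJ'⟩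
    · -- 6 pairs
      intro J hJ
      obtain ⟨hJ𝓙, hJsub⟩ := Finset.mem_filter.1 hJ
      exact hcard1 J hJ𝓙 hJsub
    · -- 7
      ext J
      simp only [Finset.mem_sdiff, Finset.mem_filter, Finset.mem_image, not_and]
      constructor
      · rintro ⟨hJ, hn⟩
        have hnsub := hn hJ
        obtain ⟨I, hIJ, hIn⟩ := Finset.not_subset.1 hnsub
        have hI𝓘 : I ∈ 𝓘 := h𝓙.2.1 J hJ hIJ
        have hJI := (hbig I hI𝓘 hIn).2
        have : J = {I} := h𝓙.eq_of_mem hJ hJI hIJ (Finset.mem_singleton_self I)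
        exact ⟨I, ⟨hI𝓘, by simpa [Finset.mem_image] using hIn⟩, this.symm⟩
      · rintro ⟨I, ⟨hI𝓘, hIn0⟩, rfl⟩
        have hIn : I ∉ S.image (fun s => ({s} : Finset (Fin p))) := by
          simpa [Finset.mem_image] using hIn0
        refine ⟨(hbig I hI𝓘 hIn).2, fun _ hsub => ?_⟩
        exact hIn (hsub (Finset.mem_singleton_self I))
  · -- DPP → equality
    rintro ⟨S, _, _, _, _, ⟨hpart5, hcard5⟩, ⟨hpart6, hcard6⟩, h7⟩
    have hinj : (S.image (fun s => ({s} : Finset (Fin p)))).card = S.card :=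
      Finset.card_image_of_injective _ (fun a b h => by simpa using h)
    have e5 : 2 * (𝓘 \ S.image (fun s => ({s} : Finset (Fin p)))).card
        = (Finset.univ \ S).card := by
      rw [← hpart5.sum_card]
      rw [Finset.sum_congr rfl hcard5, Finset.sum_const, smul_eq_mul, mul_comm]
    have e6 : 2 * (𝓙.filter (fun J => J ⊆ S.image (fun s => ({s} : Finset (Fin p))))).card
        = S.card := by
      rw [← hinj, ← hpart6.sum_card]
      rw [Finset.sum_congr rfl hcard6, Finset.sum_const, smul_eq_mul, mul_comm]
    have e7 : (𝓙 \ 𝓙.filter (fun J => J ⊆ S.image (fun s => ({s} : Finset (Fin p))))).card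
        = (𝓘 \ S.image (fun s => ({s} : Finset (Fin p)))).card := by
      rw [h7]
      exact Finset.card_image_of_injective _ (fun a b h => by simpa using h)
    have ecard : (𝓙 \ 𝓙.filter (fun J => J ⊆ S.image (fun s => ({s} : Finset (Fin p))))).card
        + (𝓙.filter (fun J => J ⊆ S.image (fun s => ({s} : Finset (Fin p))))).card
        = 𝓙.card := Finset.card_sdiff_add_card_eq_card (Finset.filter_subset _ _)
    have eS : (Finset.univ \ S).card + S.card = p := by
      rw [Finset.card_sdiff_add_card_eq_card (Finset.subset_univ S)]
      simp
    omega
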